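/- Let n ∈ ℕ, 0 < s < n, q > n/s, j ∈ ℤ, and x ∈ ℝ^n. Then for every measurable function f on ℝ^n, ‖ f(x + 2^{-j} y)/(1+|y|)^s ‖_{L^{n/s,∞}(ℝ^n)} (quasi-norm in the variable y) ≤ C · M_{L^q} f(x), where C depends only on n, s, q (not on j or x). -/

import Mathlib

open MeasureTheory Metric Set
open scoped ENNReal

/-- Weak Lorentz quasi-norm `‖f‖_{L^{p,∞}} = sup_{λ>0} λ |{|f|>λ}|^{1/p}`. -/
noncomputable def weakLorentzNorm {n : ℕ} (f : EuclideanSpace ℝ (Fin n) → ℝ) (p : ℝ) : ℝ≥0∞ :=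
  ⨆ (l : ℝ) (_ : 0 < l), ENNReal.ofReal l * (volume {x | l < |f x|}) ^ (1 / p)

/-- Centered `L^q` maximal function `M_{L^q} f x`. -/
noncomputable def maxLq {n : ℕ} (f : EuclideanSpace ℝ (Fin n) → ℝ) (q : ℝ)
    (x : EuclideanSpace ℝ (Fin n)) : ℝ≥0∞ :=
  ⨆ (r : ℝ) (_ : 0 < r),
    ((volume (ball x r))⁻¹ * ∫⁻ y in ball x r, ENNReal.ofReal (|f y| ^ q)) ^ (1 / q)

private lemma myGeomSumLe {r : ℝ≥0∞} (hr : 2 ≤ r) (K : ℕ) :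
    ∑ k ∈ Finset.range K, r ^ k ≤ r ^ K := by
  induction K with
  | zero => simp
  | succ K ih =>
    rw [Finset.sum_range_succ, pow_succ]
    calc ∑ k ∈ Finset.range K, r ^ k + r ^ K ≤ r ^ K + r ^ K := add_le_add_left ih _
      _ = 2 * r ^ K := (two_mul _).symm
      _ ≤ r * r ^ K := mul_le_mul_left hr _
      _ = r ^ K * r := mul_comm _ _

/-- Chebyshev + maximal function bound on one piece. -/
private lemma cheb_bound (n : ℕ) (hn : 0 < n) {q : ℝ} (hq0 : 0 < q)
    (f : EuclideanSpace ℝ (Fin n) → ℝ) (hf : Measurable f)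
    (x : EuclideanSpace ℝ (Fin n)) {c R t : ℝ} (hc : 0 < c) (hR : 0 < R) (ht : 0 < t) :
    volume {y : EuclideanSpace ℝ (Fin n) | ‖y‖ < R ∧ t < |f (x + c • y)|}
      ≤ ENNReal.ofReal (R ^ n) * volume (ball (0 : EuclideanSpace ℝ (Fin n)) 1)
        * ((maxLq f q x) ^ q * ((ENNReal.ofReal t) ^ q)⁻¹) := by
  haveI : Nonempty (Fin n) := ⟨⟨0, hn⟩⟩
  have hdim : Module.finrank ℝ (EuclideanSpace ℝ (Fin n)) = n := finrank_euclideanSpace_fin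
  set M := maxLq f q x with hM
  set ε : ℝ≥0∞ := (ENNReal.ofReal t) ^ q with hε
  have hε0 : ε ≠ 0 := (ENNReal.rpow_pos (ENNReal.ofReal_pos.mpr ht) ENNReal.ofReal_ne_top).ne'
  have hεt : ε ≠ ∞ := (ENNReal.rpow_lt_top_of_nonneg hq0.le ENNReal.ofReal_ne_top).ne
  have hsub : {y : EuclideanSpace ℝ (Fin n) | ‖y‖ < R ∧ t < |f (x + c • y)|}
      = (c • ·) ⁻¹' ((x + ·) ⁻¹' {z | z ∈ ball x (c * R) ∧ t < |f z|}) := by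
    ext y
    simp only [mem_setOf_eq, mem_preimage, mem_ball, dist_eq_norm, add_sub_cancel_left,
      norm_smul, Real.norm_eq_abs, abs_of_pos hc, mul_lt_mul_iff_right₀ hc]
  have hgmeas : Measurable fun z => ENNReal.ofReal (|f z| ^ q) :=
    ENNReal.measurable_ofReal.comp ((Real.continuous_rpow_const hq0.le).measurable.comp hf.abs)
  -- Chebyshev
  have cheb : volume {z | z ∈ ball x (c * R) ∧ t < |f z|}
      ≤ ε⁻¹ * ∫⁻ z in ball x (c * R), ENNReal.ofReal (|f z| ^ q) := by
    have h1 : {z : EuclideanSpace ℝ (Fin n) | z ∈ ball x (c * R) ∧ t < |f z|}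
        ⊆ {z | ε ≤ ENNReal.ofReal (|f z| ^ q)} ∩ ball x (c * R) := by
      intro z hz
      refine ⟨?_, hz.1⟩
      have h2 : t ^ q ≤ |f z| ^ q := Real.rpow_le_rpow ht.le hz.2.le hq0.le
      calc ε = ENNReal.ofReal (t ^ q) := ENNReal.ofReal_rpow_of_pos ht
        _ ≤ _ := ENNReal.ofReal_le_ofReal h2
    have hSm : MeasurableSet {z : EuclideanSpace ℝ (Fin n) | ε ≤ ENNReal.ofReal (|f z| ^ q)} :=
      measurableSet_le measurable_const hgmeas
    have h3 := mul_meas_ge_le_lintegral₀ (μ := volume.restrict (ball x (c * R)))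
      hgmeas.aemeasurable ε
    calc volume {z | z ∈ ball x (c * R) ∧ t < |f z|}
        ≤ volume ({z | ε ≤ ENNReal.ofReal (|f z| ^ q)} ∩ ball x (c * R)) := measure_mono h1
      _ = (volume.restrict (ball x (c * R))) {z | ε ≤ ENNReal.ofReal (|f z| ^ q)} :=
          (Measure.restrict_apply hSm).symm
      _ = ε⁻¹ * (ε * (volume.restrict (ball x (c * R)))
            {z | ε ≤ ENNReal.ofReal (|f z| ^ q)}) := by
          rw [← mul_assoc, ENNReal.inv_mul_cancel hε0 hεt, one_mul]
      _ ≤ ε⁻¹ * ∫⁻ z in ball x (c * R), ENNReal.ofReal (|f z| ^ q) := mul_le_mul_right h3 _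
  -- maximal function bound
  have hBpos : volume (ball x (c * R)) ≠ 0 :=
    (measure_ball_pos volume x (by positivity)).ne'
  have hBfin : volume (ball x (c * R)) ≠ ∞ := measure_ball_lt_top.ne
  have hmax : ∫⁻ z in ball x (c * R), ENNReal.ofReal (|f z| ^ q)
      ≤ M ^ q * volume (ball x (c * R)) := by
    have h1 : ((volume (ball x (c * R)))⁻¹
        * ∫⁻ z in ball x (c * R), ENNReal.ofReal (|f z| ^ q)) ^ (1 / q) ≤ M := by
      rw [hM, maxLq]
      refine le_iSup_of_le (c * R) ?_
      rw [iSup_pos (by positivity : (0:ℝ) < c * R)]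
    have h2 := ENNReal.rpow_le_rpow h1 hq0.le
    rw [← ENNReal.rpow_mul, one_div, inv_mul_cancel₀ hq0.ne', ENNReal.rpow_one] at h2
    calc ∫⁻ z in ball x (c * R), ENNReal.ofReal (|f z| ^ q)
        = volume (ball x (c * R)) * ((volume (ball x (c * R)))⁻¹
            * ∫⁻ z in ball x (c * R), ENNReal.ofReal (|f z| ^ q)) := by
          rw [← mul_assoc, ENNReal.mul_inv_cancel hBpos hBfin, one_mul]
      _ ≤ volume (ball x (c * R)) * M ^ q := mul_le_mul_right h2 _
      _ = M ^ q * volume (ball x (c * R)) := mul_comm _ _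
  have hball : volume (ball x (c * R))
      = ENNReal.ofReal ((c * R) ^ n) * volume (ball (0 : EuclideanSpace ℝ (Fin n)) 1) := by
    rw [Measure.addHaar_ball volume x (by positivity : (0:ℝ) ≤ c * R), hdim]
  have hcinv : ENNReal.ofReal ((c ^ n)⁻¹) * ENNReal.ofReal (c ^ n) = 1 := by
    rw [← ENNReal.ofReal_mul (by positivity), inv_mul_cancel₀ (by positivity),
      ENNReal.ofReal_one]
  calc volume {y : EuclideanSpace ℝ (Fin n) | ‖y‖ < R ∧ t < |f (x + c • y)|}
      = ENNReal.ofReal (|(c ^ n)⁻¹|)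
        * volume {z | z ∈ ball x (c * R) ∧ t < |f z|} := by
        rw [hsub, Measure.addHaar_preimage_smul volume hc.ne', measure_preimage_add, hdim]
    _ ≤ ENNReal.ofReal ((c ^ n)⁻¹)
        * (ε⁻¹ * (M ^ q * volume (ball x (c * R)))) := by
        rw [abs_of_pos (by positivity : (0:ℝ) < (c ^ n)⁻¹)]
        exact mul_le_mul_right (cheb.trans (mul_le_mul_right hmax _)) _
    _ = ENNReal.ofReal (R ^ n) * volume (ball (0 : EuclideanSpace ℝ (Fin n)) 1)
        * (M ^ q * ε⁻¹) := by
        rw [hball, mul_pow, ENNReal.ofReal_mul (by positivity : (0:ℝ) ≤ c ^ n)]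
        calc ENNReal.ofReal ((c ^ n)⁻¹) * (ε⁻¹ * (M ^ q * (ENNReal.ofReal (c ^ n)
              * ENNReal.ofReal (R ^ n) * volume (ball (0 : EuclideanSpace ℝ (Fin n)) 1))))
            = (ENNReal.ofReal ((c ^ n)⁻¹) * ENNReal.ofReal (c ^ n))
              * (ENNReal.ofReal (R ^ n) * volume (ball (0 : EuclideanSpace ℝ (Fin n)) 1)
              * (M ^ q * ε⁻¹)) := by ring
          _ = _ := by rw [hcinv, one_mul]

theorem statement1 (n : ℕ) (hn : 0 < n) (s q : ℝ) (hs0 : 0 < s) (hsn : s < n)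
    (hq : (n : ℝ) / s < q) :
    ∃ C : ℝ, 0 < C ∧ ∀ (j : ℤ) (x : EuclideanSpace ℝ (Fin n))
      (f : EuclideanSpace ℝ (Fin n) → ℝ), Measurable f →
      weakLorentzNorm (fun y => f (x + (2 : ℝ) ^ (-j) • y) / (1 + ‖y‖) ^ s) ((n : ℝ) / s)
        ≤ ENNReal.ofReal C * maxLq f q x := by
  haveI : Nonempty (Fin n) := ⟨⟨0, hn⟩⟩
  have hn0 : (0:ℝ) < n := by exact_mod_cast hn
  have hn1 : (1:ℝ) ≤ n := by exact_mod_cast hn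
  have hq0 : (0:ℝ) < q := lt_trans (by positivity) hq
  have hnsq : (n:ℝ) < s * q := by
    have := (div_lt_iff₀ hs0).mp hq
    linarith
  have hw0 : (2:ℝ≥0∞) ≠ 0 := two_ne_zero
  have hwt : (2:ℝ≥0∞) ≠ ∞ := ENNReal.ofNat_ne_top
  have hw : ∀ u v : ℝ, (2:ℝ≥0∞) ^ u * (2:ℝ≥0∞) ^ v = (2:ℝ≥0∞) ^ (u + v) :=
    fun u v => (ENNReal.rpow_add u v hw0 hwt).symm
  set B1 := volume (ball (0 : EuclideanSpace ℝ (Fin n)) 1) with hB1def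
  have hB1pos : B1 ≠ 0 := (measure_ball_pos volume _ one_pos).ne'
  have hB1fin : B1 ≠ ∞ := measure_ball_lt_top.ne
  set ρ : ℝ≥0∞ := (2:ℝ≥0∞) ^ ((n:ℝ) - s * q) with hρdef
  have hρ1 : ρ < 1 := by
    have h1 : ((n:ℝ) - s * q) < 0 := by linarith
    have h2 := ENNReal.rpow_lt_rpow_of_exponent_lt (x := 2) (by norm_num) hwt h1
    rwa [ENNReal.rpow_zero] at h2
  set σ : ℝ≥0∞ := (1 - ρ)⁻¹ with hσdef
  have hσfin : σ ≠ ∞ := by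
    rw [hσdef, ENNReal.inv_ne_top]
    simp [tsub_eq_zero_iff_le, not_le, hρ1]
  set D : ℝ≥0∞ := B1 * (2:ℝ≥0∞) ^ n * ((2:ℝ≥0∞) ^ n + σ) with hDdef
  have hwnfin : (2:ℝ≥0∞) ^ n ≠ ∞ := ENNReal.pow_ne_top hwt
  have hDfin : D ≠ ∞ := by
    rw [hDdef]
    exact ENNReal.mul_ne_top (ENNReal.mul_ne_top hB1fin hwnfin)
      (ENNReal.add_ne_top.mpr ⟨hwnfin, hσfin⟩)
  set Cbig : ℝ≥0∞ := D ^ (s / (n:ℝ)) with hCbigdef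
  have hCfin : Cbig ≠ ∞ := (ENNReal.rpow_lt_top_of_nonneg (by positivity) hDfin).ne
  refine ⟨max 1 Cbig.toReal, lt_of_lt_of_le one_pos (le_max_left _ _), ?_⟩
  intro j x f hf
  set A := maxLq f q x with hAdef
  have hCle : Cbig ≤ ENNReal.ofReal (max 1 Cbig.toReal) := by
    calc Cbig = ENNReal.ofReal Cbig.toReal := (ENNReal.ofReal_toReal hCfin).symm
      _ ≤ _ := ENNReal.ofReal_le_ofReal (le_max_right _ _)
  by_cases hAtop : A = ∞
  · rw [hAtop, ENNReal.mul_top (by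
      simp only [ne_eq, ENNReal.ofReal_eq_zero, not_le]
      exact lt_of_lt_of_le one_pos (le_max_left _ _))]
    exact le_top
  set c : ℝ := (2:ℝ) ^ (-j) with hcdef
  have hc : 0 < c := zpow_pos (by norm_num) _
  rw [weakLorentzNorm]
  refine iSup₂_le fun l hl => ?_
  rw [one_div_div]
  set L : ℝ≥0∞ := ENNReal.ofReal l with hLdef
  have hL0 : L ≠ 0 := by simpa [hLdef, ENNReal.ofReal_eq_zero, not_le] using hl
  have hLt : L ≠ ∞ := ENNReal.ofReal_ne_top
  set a : ℝ≥0∞ := A / L with hadef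
  have hafin : a ≠ ∞ := (ENNReal.div_lt_top hAtop hL0).ne
  have hLa : L * a = A := ENNReal.mul_div_cancel hL0 hLt
  -- the pieces
  set S : ℕ → Set (EuclideanSpace ℝ (Fin n)) := fun k =>
    {y | ‖y‖ < 2 ^ (k + 1) ∧ l * ((2:ℝ) ^ k) ^ s < |f (x + c • y)|} with hSdef
  -- covering
  have hcover : {y : EuclideanSpace ℝ (Fin n)
      | l < |f (x + c • y) / (1 + ‖y‖) ^ s|} ⊆ ⋃ k, S k := by
    intro y hy
    have hd : (0:ℝ) < (1 + ‖y‖) ^ s := Real.rpow_pos_of_pos (by positivity) s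
    have hy' : l * (1 + ‖y‖) ^ s < |f (x + c • y)| := by
      have := hy
      simp only [mem_setOf_eq, abs_div, abs_of_pos hd] at this
      exact (lt_div_iff₀ hd).mp this
    have h1y : (1:ℝ) ≤ 1 + ‖y‖ := le_add_of_nonneg_right (norm_nonneg y)
    have h0y : (0:ℝ) < 1 + ‖y‖ := by positivity
    set k : ℕ := ⌊Real.logb 2 (1 + ‖y‖)⌋₊ with hkdef
    have hlogb : 0 ≤ Real.logb 2 (1 + ‖y‖) := Real.logb_nonneg one_lt_two h1y
    have hyeq : 1 + ‖y‖ = (2:ℝ) ^ Real.logb 2 (1 + ‖y‖) :=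
      (Real.rpow_logb two_pos (by norm_num) h0y).symm
    refine mem_iUnion.mpr ⟨k, ?_, ?_⟩
    · have h2 : Real.logb 2 (1 + ‖y‖) < (k:ℝ) + 1 := Nat.lt_floor_add_one _
      have h3 : 1 + ‖y‖ < (2:ℝ) ^ ((k:ℝ) + 1) := by
        rw [hyeq]
        exact Real.rpow_lt_rpow_of_exponent_lt one_lt_two h2
      have h4 : ((2:ℝ) ^ ((k:ℝ) + 1)) = 2 ^ (k + 1) := by
        rw [show ((k:ℝ) + 1) = ((k + 1 : ℕ) : ℝ) by push_cast; ring, Real.rpow_natCast]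
      calc ‖y‖ < 1 + ‖y‖ := by linarith
        _ < _ := by rw [← h4]; exact h3
    · have h2 : (k:ℝ) ≤ Real.logb 2 (1 + ‖y‖) := Nat.floor_le hlogb
      have h3 : ((2:ℝ) ^ k : ℝ) ≤ 1 + ‖y‖ := by
        rw [hyeq, ← Real.rpow_natCast 2 k]
        exact Real.rpow_le_rpow_of_exponent_le one_le_two h2
      have h4 : ((2:ℝ) ^ k) ^ s ≤ (1 + ‖y‖) ^ s :=
        Real.rpow_le_rpow (by positivity) h3 hs0.le
      calc l * ((2:ℝ) ^ k) ^ s ≤ l * (1 + ‖y‖) ^ s :=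
            mul_le_mul_of_nonneg_left h4 hl.le
        _ < _ := hy'
  -- trivial bound
  have htriv : ∀ k : ℕ, volume (S k)
      ≤ B1 * (2:ℝ≥0∞) ^ n * ((2:ℝ≥0∞) ^ n) ^ k := by
    intro k
    have h1 : S k ⊆ ball (0 : EuclideanSpace ℝ (Fin n)) (2 ^ (k + 1)) := by
      intro y hy
      rw [mem_ball_zero_iff]
      exact hy.1
    calc volume (S k) ≤ volume (ball (0 : EuclideanSpace ℝ (Fin n)) (2 ^ (k + 1))) :=
          measure_mono h1
      _ = ENNReal.ofReal ((2 ^ (k + 1) : ℝ) ^ n) * B1 := by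
          rw [Measure.addHaar_ball volume _ (by positivity : (0:ℝ) ≤ 2 ^ (k + 1)),
            finrank_euclideanSpace_fin]
      _ = B1 * (2:ℝ≥0∞) ^ n * ((2:ℝ≥0∞) ^ n) ^ k := by
          rw [← pow_mul, ENNReal.ofReal_pow (by norm_num : (0:ℝ) ≤ 2),
            show ENNReal.ofReal 2 = (2:ℝ≥0∞) by simp,
            show (k + 1) * n = n + n * k by ring, pow_add, ← pow_mul 2 n k]
          ring
  -- Chebyshev bound
  have hcheb : ∀ k : ℕ, volume (S k)
      ≤ B1 * (2:ℝ≥0∞) ^ n * (a ^ q * ρ ^ k) := by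
    intro k
    have ht : (0:ℝ) < l * ((2:ℝ) ^ k) ^ s :=
      mul_pos hl (Real.rpow_pos_of_pos (by positivity) s)
    have h0 := cheb_bound n hn hq0 f hf x hc
      (by positivity : (0:ℝ) < 2 ^ (k + 1)) ht
    refine h0.trans (le_of_eq ?_)
    have hLq0 : L ^ q ≠ 0 := (ENNReal.rpow_pos (hL0.bot_lt) hLt).ne'
    have hLqt : L ^ q ≠ ∞ := (ENNReal.rpow_lt_top_of_nonneg hq0.le hLt).ne
    have e1 : ENNReal.ofReal ((2 ^ (k + 1) : ℝ) ^ n) = (2:ℝ≥0∞) ^ ((k + 1) * n) := by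
      rw [← pow_mul, ENNReal.ofReal_pow (by norm_num : (0:ℝ) ≤ 2),
        show ENNReal.ofReal 2 = (2:ℝ≥0∞) by simp]
    have e2a : ENNReal.ofReal (l * ((2:ℝ) ^ k) ^ s) = L * (2:ℝ≥0∞) ^ ((k:ℝ) * s) := by
      rw [ENNReal.ofReal_mul hl.le]
      congr 1
      rw [← ENNReal.ofReal_rpow_of_pos (by positivity : (0:ℝ) < (2:ℝ) ^ k),
        ENNReal.ofReal_pow (by norm_num : (0:ℝ) ≤ 2),
        show ENNReal.ofReal 2 = (2:ℝ≥0∞) by simp,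
        ← ENNReal.rpow_natCast 2 k, ← ENNReal.rpow_mul]
    have e2 : ((ENNReal.ofReal (l * ((2:ℝ) ^ k) ^ s)) ^ q)⁻¹
        = (L ^ q)⁻¹ * (2:ℝ≥0∞) ^ (-((k:ℝ) * s * q)) := by
      rw [e2a, ENNReal.mul_rpow_of_nonneg _ _ hq0.le, ← ENNReal.rpow_mul,
        ENNReal.mul_inv (Or.inl hLq0) (Or.inl hLqt), ← ENNReal.rpow_neg, ← ENNReal.rpow_neg]
    have e3 : A ^ q * (L ^ q)⁻¹ = a ^ q := by
      rw [hadef, div_eq_mul_inv, ENNReal.mul_rpow_of_nonneg _ _ hq0.le, ENNReal.inv_rpow]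
    have e4 : (2:ℝ≥0∞) ^ ((k + 1) * n) * (2:ℝ≥0∞) ^ (-((k:ℝ) * s * q))
        = (2:ℝ≥0∞) ^ n * ρ ^ k := by
      have h5 : ρ ^ k = (2:ℝ≥0∞) ^ ((k:ℝ) * ((n:ℝ) - s * q)) := by
        rw [hρdef, ← ENNReal.rpow_natCast _ k, ← ENNReal.rpow_mul, mul_comm]
      rw [h5, ← ENNReal.rpow_natCast 2 ((k + 1) * n), ← ENNReal.rpow_natCast 2 n, hw, hw]
      congr 1
      push_cast
      ring
    calc ENNReal.ofReal ((2 ^ (k + 1) : ℝ) ^ n) * B1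
          * (maxLq f q x ^ q * ((ENNReal.ofReal (l * ((2:ℝ) ^ k) ^ s)) ^ q)⁻¹)
        = ((2:ℝ≥0∞) ^ ((k + 1) * n) * (2:ℝ≥0∞) ^ (-((k:ℝ) * s * q))) * B1
          * (A ^ q * (L ^ q)⁻¹) := by
          rw [e1, e2, ← hAdef]; ring
      _ = B1 * (2:ℝ≥0∞) ^ n * (a ^ q * ρ ^ k) := by rw [e4, e3]; ring
  -- splitting the measure
  have hsplit : ∀ K : ℕ, volume {y : EuclideanSpace ℝ (Fin n)
      | l < |f (x + c • y) / (1 + ‖y‖) ^ s|}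
      ≤ (∑ k ∈ Finset.range K, volume (S k)) + ∑' m : ℕ, volume (S (K + m)) := by
    intro K
    have h1 : (⋃ k, S k) ⊆ (⋃ k ∈ Finset.range K, S k) ∪ ⋃ m : ℕ, S (K + m) := by
      intro y hy
      obtain ⟨k, hk⟩ := mem_iUnion.mp hy
      rcases lt_or_ge k K with h | h
      · exact Or.inl (mem_iUnion₂.mpr ⟨k, Finset.mem_range.mpr h, hk⟩)
      · exact Or.inr (mem_iUnion.mpr ⟨k - K, by rwa [Nat.add_sub_cancel' h]⟩)
    calc volume {y : EuclideanSpace ℝ (Fin n) | l < |f (x + c • y) / (1 + ‖y‖) ^ s|}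
        ≤ volume ((⋃ k ∈ Finset.range K, S k) ∪ ⋃ m : ℕ, S (K + m)) :=
          measure_mono (hcover.trans h1)
      _ ≤ volume (⋃ k ∈ Finset.range K, S k) + volume (⋃ m : ℕ, S (K + m)) :=
          measure_union_le _ _
      _ ≤ (∑ k ∈ Finset.range K, volume (S k)) + ∑' m : ℕ, volume (S (K + m)) :=
          add_le_add (measure_biUnion_finset_le _ _) (measure_iUnion_le _)
  -- tail estimate
  have htail : ∀ K : ℕ, ∑' m : ℕ, volume (S (K + m))
      ≤ B1 * (2:ℝ≥0∞) ^ n * (a ^ q * ρ ^ K) * σ := by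
    intro K
    calc ∑' m : ℕ, volume (S (K + m))
        ≤ ∑' m : ℕ, B1 * (2:ℝ≥0∞) ^ n * (a ^ q * ρ ^ (K + m)) :=
          ENNReal.tsum_le_tsum fun m => hcheb (K + m)
      _ = B1 * (2:ℝ≥0∞) ^ n * (a ^ q * ρ ^ K) * ∑' m : ℕ, ρ ^ m := by
          rw [← ENNReal.tsum_mul_left]
          congr 1; ext m
          rw [pow_add]; ring
      _ = B1 * (2:ℝ≥0∞) ^ n * (a ^ q * ρ ^ K) * σ := by
          rw [ENNReal.tsum_geometric, hσdef]
  -- main estimate on the distribution set, according to the size of a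
  have hmain : volume {y : EuclideanSpace ℝ (Fin n)
      | l < |f (x + c • y) / (1 + ‖y‖) ^ s|} ≤ D * (a ^ q) ∧ a ≤ 1 ∨
      volume {y : EuclideanSpace ℝ (Fin n)
      | l < |f (x + c • y) / (1 + ‖y‖) ^ s|} ≤ D * (a ^ ((n:ℝ)/s)) := by
    rcases le_or_gt a 1 with ha1 | ha1
    · left
      refine ⟨?_, ha1⟩
      calc volume {y : EuclideanSpace ℝ (Fin n) | l < |f (x + c • y) / (1 + ‖y‖) ^ s|}
          ≤ (∑ k ∈ Finset.range 0, volume (S k)) + ∑' m : ℕ, volume (S (0 + m)) := hsplit 0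
        _ = ∑' m : ℕ, volume (S (0 + m)) := by rw [Finset.sum_range_zero, zero_add]
        _ ≤ B1 * (2:ℝ≥0∞) ^ n * (a ^ q * ρ ^ 0) * σ := htail 0
        _ = B1 * (2:ℝ≥0∞) ^ n * σ * a ^ q := by rw [pow_zero]; ring
        _ ≤ D * a ^ q := by
            rw [hDdef]
            exact mul_le_mul_left (mul_le_mul_right le_add_self _) _
    · right
      -- choose minimal K with a ≤ 2 ^ (K s)
      have hex : ∃ K : ℕ, a ≤ (2:ℝ≥0∞) ^ ((K:ℝ) * s) := by
        obtain ⟨N, hN⟩ := ENNReal.exists_nat_gt hafin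
        refine ⟨⌈(N:ℝ) / s⌉₊, ?_⟩
        have h1 : (N:ℝ) ≤ (⌈(N:ℝ) / s⌉₊ : ℝ) * s := by
          rw [← div_le_iff₀ hs0]
          exact Nat.le_ceil _
        calc a ≤ (N : ℝ≥0∞) := hN.le
          _ ≤ (2:ℝ≥0∞) ^ (N : ℕ) := by
              exact_mod_cast Nat.cast_le.mpr (Nat.lt_two_pow_self (n := N)).le
          _ = (2:ℝ≥0∞) ^ ((N:ℝ)) := (ENNReal.rpow_natCast 2 N).symm
          _ ≤ _ := ENNReal.rpow_le_rpow_of_exponent_le one_le_two h1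
      set K : ℕ := Nat.find hex with hKdef
      have hK : a ≤ (2:ℝ≥0∞) ^ ((K:ℝ) * s) := Nat.find_spec hex
      have hKpos : K ≠ 0 := by
        intro h0
        rw [h0] at hK
        simp only [Nat.cast_zero, zero_mul, ENNReal.rpow_zero] at hK
        exact absurd hK (not_le.mpr ha1)
      obtain ⟨K', hK'⟩ : ∃ K', K = K' + 1 := ⟨K - 1, (Nat.succ_pred_eq_of_pos
        (Nat.pos_of_ne_zero hKpos)).symm⟩
      have hK'lt : (2:ℝ≥0∞) ^ ((K':ℝ) * s) < a := by
        have := Nat.find_min hex (by omega : K' < K)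
        exact not_le.mp this
      have ha0 : a ≠ 0 := by
        intro h0; rw [h0] at ha1; exact absurd ha1 (by simp)
      -- head bound
      have hhead : ∑ k ∈ Finset.range K, volume (S k)
          ≤ B1 * (2:ℝ≥0∞) ^ n * ((2:ℝ≥0∞) ^ n * a ^ ((n:ℝ)/s)) := by
        have h1 : ∑ k ∈ Finset.range K, volume (S k)
            ≤ B1 * (2:ℝ≥0∞) ^ n * ((2:ℝ≥0∞) ^ n) ^ K := by
          calc ∑ k ∈ Finset.range K, volume (S k)
              ≤ ∑ k ∈ Finset.range K, B1 * (2:ℝ≥0∞) ^ n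
                * ((2:ℝ≥0∞) ^ n) ^ k := Finset.sum_le_sum fun k _ => htriv k
            _ = B1 * (2:ℝ≥0∞) ^ n
                * ∑ k ∈ Finset.range K, ((2:ℝ≥0∞) ^ n) ^ k := by
                rw [Finset.mul_sum]
            _ ≤ _ := by
                refine mul_le_mul_right (myGeomSumLe ?_ K) _
                calc (2:ℝ≥0∞) = (2:ℝ≥0∞) ^ 1 := (pow_one 2).symm
                  _ ≤ (2:ℝ≥0∞) ^ n := pow_le_pow_right' one_le_two hn
        refine h1.trans (mul_le_mul_right ?_ _)
        have h2 : ((2:ℝ≥0∞) ^ n) ^ K = (2:ℝ≥0∞) ^ n * (2:ℝ≥0∞) ^ (n * K') := by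
          rw [hK', ← pow_mul, show n * (K' + 1) = n + n * K' by ring, pow_add]
        rw [h2]
        refine mul_le_mul_right ?_ _
        have h3 : (2:ℝ≥0∞) ^ (n * K') = ((2:ℝ≥0∞) ^ ((K':ℝ) * s)) ^ ((n:ℝ)/s) := by
          rw [← ENNReal.rpow_natCast 2 (n * K'), ← ENNReal.rpow_mul]
          congr 1
          push_cast
          field_simp
        rw [h3]
        exact ENNReal.rpow_le_rpow hK'lt.le (by positivity)
      -- tail exponent bound
      have htail2 : a ^ q * ρ ^ K ≤ a ^ ((n:ℝ)/s) := by
        set e : ℝ := (s * q - (n:ℝ)) / s with hedef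
        have he0 : 0 < e := div_pos (by linarith) hs0
        have h1 : ρ ^ K = ((2:ℝ≥0∞) ^ ((K:ℝ) * s)) ^ (-e) := by
          rw [hρdef, ← ENNReal.rpow_natCast _ K, ← ENNReal.rpow_mul, ← ENNReal.rpow_mul]
          congr 1
          rw [hedef]
          field_simp
          ring
        have h2 : ((2:ℝ≥0∞) ^ ((K:ℝ) * s)) ^ (-e) ≤ a ^ (-e) := by
          rw [ENNReal.rpow_neg, ENNReal.rpow_neg]
          exact ENNReal.inv_le_inv.mpr (ENNReal.rpow_le_rpow hK he0.le)
        calc a ^ q * ρ ^ K ≤ a ^ q * a ^ (-e) := by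
              rw [h1]; exact mul_le_mul_right h2 _
          _ = a ^ (q + -e) := (ENNReal.rpow_add _ _ ha0 hafin).symm
          _ = a ^ ((n:ℝ)/s) := by
              congr 1
              rw [hedef]
              field_simp
              ring
      calc volume {y : EuclideanSpace ℝ (Fin n) | l < |f (x + c • y) / (1 + ‖y‖) ^ s|}
          ≤ (∑ k ∈ Finset.range K, volume (S k)) + ∑' m : ℕ, volume (S (K + m)) := hsplit K
        _ ≤ B1 * (2:ℝ≥0∞) ^ n * ((2:ℝ≥0∞) ^ n * a ^ ((n:ℝ)/s))
            + B1 * (2:ℝ≥0∞) ^ n * (a ^ q * ρ ^ K) * σ :=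
            add_le_add hhead (htail K)
        _ ≤ B1 * (2:ℝ≥0∞) ^ n * ((2:ℝ≥0∞) ^ n * a ^ ((n:ℝ)/s))
            + B1 * (2:ℝ≥0∞) ^ n * a ^ ((n:ℝ)/s) * σ := by
            refine add_le_add_right ?_ _
            refine mul_le_mul_left ?_ _
            rw [mul_assoc, mul_assoc]
            exact mul_le_mul_right (mul_le_mul_right htail2 _) _
        _ = D * (a ^ ((n:ℝ)/s)) := by
            rw [hDdef]; ring
  -- conclude
  have hsn0 : (s / (n:ℝ)) ≠ 0 := by positivity
  have hns : ((n:ℝ)/s) * (s/(n:ℝ)) = 1 := by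
    field_simp
  have hfinal : ENNReal.ofReal l * volume {y : EuclideanSpace ℝ (Fin n)
      | l < |f (x + c • y) / (1 + ‖y‖) ^ s|} ^ (s/(n:ℝ)) ≤ Cbig * A := by
    rcases hmain with ⟨h, ha1⟩ | h
    · have h2 : (volume {y : EuclideanSpace ℝ (Fin n)
          | l < |f (x + c • y) / (1 + ‖y‖) ^ s|}) ^ (s/(n:ℝ))
          ≤ Cbig * a ^ (q * (s/(n:ℝ))) := by
        calc (volume {y : EuclideanSpace ℝ (Fin n)
            | l < |f (x + c • y) / (1 + ‖y‖) ^ s|}) ^ (s/(n:ℝ))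
            ≤ (D * a ^ q) ^ (s/(n:ℝ)) := ENNReal.rpow_le_rpow h (by positivity)
          _ = Cbig * a ^ (q * (s/(n:ℝ))) := by
              rw [ENNReal.mul_rpow_of_nonneg _ _ (by positivity : (0:ℝ) ≤ s/(n:ℝ)),
                ← ENNReal.rpow_mul, hCbigdef]
      have h3 : a ^ (q * (s/(n:ℝ))) ≤ a := by
        calc a ^ (q * (s/(n:ℝ))) ≤ a ^ ((1:ℝ)) := by
              refine ENNReal.rpow_le_rpow_of_exponent_ge ha1 ?_
              calc (1:ℝ) = ((n:ℝ)/s) * (s/(n:ℝ)) := hns.symm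
                _ ≤ q * (s/(n:ℝ)) := by
                    exact mul_le_mul_of_nonneg_right hq.le (by positivity)
          _ = a := ENNReal.rpow_one a
      calc ENNReal.ofReal l * volume {y : EuclideanSpace ℝ (Fin n)
          | l < |f (x + c • y) / (1 + ‖y‖) ^ s|} ^ (s/(n:ℝ))
          ≤ L * (Cbig * a ^ (q * (s/(n:ℝ)))) := mul_le_mul_right h2 _
        _ ≤ L * (Cbig * a) := mul_le_mul_right (mul_le_mul_right h3 _) _
        _ = Cbig * (L * a) := by ring
        _ = Cbig * A := by rw [hLa]
    · have h2 : (volume {y : EuclideanSpace ℝ (Fin n)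
          | l < |f (x + c • y) / (1 + ‖y‖) ^ s|}) ^ (s/(n:ℝ)) ≤ Cbig * a := by
        calc (volume {y : EuclideanSpace ℝ (Fin n)
            | l < |f (x + c • y) / (1 + ‖y‖) ^ s|}) ^ (s/(n:ℝ))
            ≤ (D * a ^ ((n:ℝ)/s)) ^ (s/(n:ℝ)) := ENNReal.rpow_le_rpow h (by positivity)
          _ = Cbig * a := by
              rw [ENNReal.mul_rpow_of_nonneg _ _ (by positivity : (0:ℝ) ≤ s/(n:ℝ)),
                ← ENNReal.rpow_mul, hns, ENNReal.rpow_one, hCbigdef]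
      calc ENNReal.ofReal l * volume {y : EuclideanSpace ℝ (Fin n)
          | l < |f (x + c • y) / (1 + ‖y‖) ^ s|} ^ (s/(n:ℝ))
          ≤ L * (Cbig * a) := mul_le_mul_right h2 _
        _ = Cbig * (L * a) := by ring
        _ = Cbig * A := by rw [hLa]
  exact hfinal.trans (mul_le_mul_left hCle _)
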